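/- Let κ₁, κ₂ > 0, θ₁, θ₂ ≥ 0, let r₂ be a real number with r₂ > θ₂ − 1, and let ρ₁, ρ₂ > max(θ₁, θ₂). Assume (r₂ + 1 − θ₂)/κ₂ > (1 + ρ₂ + κ₁ − θ₂)/(1 + ρ₁ + κ₂ − θ₁). Then there exist constants δ, C > 0 such that for every integer m ≥ 1 and all real 0 < x, y ≤ 1/m one has y^{θ₂−1−ρ₂} x^{κ₂} + x^{θ₁−1−ρ₁} y^{κ₁} ≥ C · m^{δ} · y^{r₂−ρ₂}. -/

import Mathlib

open Real

theorem lemma_t3_2 (κ₁ κ₂ θ₁ θ₂ r₂ ρ₁ ρ₂ : ℝ)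
    (hκ₁ : 0 < κ₁) (hκ₂ : 0 < κ₂) (hθ₁ : 0 ≤ θ₁) (hθ₂ : 0 ≤ θ₂)
    (hr₂ : r₂ > θ₂ - 1)
    (hρ₁ : ρ₁ > max θ₁ θ₂) (hρ₂ : ρ₂ > max θ₁ θ₂)
    (h : (r₂ + 1 - θ₂) / κ₂ > (1 + ρ₂ + κ₁ - θ₂) / (1 + ρ₁ + κ₂ - θ₁)) :
    ∃ δ C : ℝ, 0 < δ ∧ 0 < C ∧
      ∀ m : ℕ, 1 ≤ m → ∀ x y : ℝ, 0 < x → x ≤ 1 / (m : ℝ) → 0 < y → y ≤ 1 / (m : ℝ) →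
        y ^ (θ₂ - 1 - ρ₂) * x ^ κ₂ + x ^ (θ₁ - 1 - ρ₁) * y ^ κ₁ ≥
          C * (m : ℝ) ^ δ * y ^ (r₂ - ρ₂) := by
  have hθ₁ρ₁ : θ₁ < ρ₁ := lt_of_le_of_lt (le_max_left _ _) hρ₁
  have hθ₂ρ₂ : θ₂ < ρ₂ := lt_of_le_of_lt (le_max_right _ _) hρ₂
  set a : ℝ := 1 + ρ₁ - θ₁ with ha_def
  have ha : 0 < a := by simp only [ha_def]; linarith
  have haκ : 0 < a + κ₂ := by linarith
  set t : ℝ := a / (a + κ₂) with ht_def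
  have ht0 : 0 < t := div_pos ha haκ
  have ht1 : t < 1 := (div_lt_one haκ).2 (by linarith)
  set e : ℝ := t * (θ₂ - 1 - ρ₂) + (1 - t) * κ₁ with he_def
  have h' : (1 + ρ₂ + κ₁ - θ₂) * κ₂ < (r₂ + 1 - θ₂) * (a + κ₂) := by
    rw [gt_iff_lt, div_lt_div_iff₀ (by linarith) hκ₂] at h
    have : a + κ₂ = 1 + ρ₁ + κ₂ - θ₁ := by rw [ha_def]; ring
    rw [this]; exact h
  have het : e * (a + κ₂) = a * (θ₂ - 1 - ρ₂) + κ₂ * κ₁ := by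
    rw [he_def, ht_def]
    field_simp
    ring
  have hδ : 0 < r₂ - ρ₂ - e := by
    have h2 : 0 < (r₂ - ρ₂ - e) * (a + κ₂) := by nlinarith [het, h']
    nlinarith [h2, haκ]
  refine ⟨r₂ - ρ₂ - e, 1, hδ, one_pos, ?_⟩
  intro m hm x y hx hxm hy hym
  have hmpos : (0 : ℝ) < (m : ℝ) := by exact_mod_cast Nat.pos_of_ne_zero (by omega)
  set A : ℝ := y ^ (θ₂ - 1 - ρ₂) * x ^ κ₂ with hA_def
  set B : ℝ := x ^ (θ₁ - 1 - ρ₁) * y ^ κ₁ with hB_def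
  have hApos : 0 < A := mul_pos (rpow_pos_of_pos hy _) (rpow_pos_of_pos hx _)
  have hBpos : 0 < B := mul_pos (rpow_pos_of_pos hx _) (rpow_pos_of_pos hy _)
  have hxexp : κ₂ * t + (θ₁ - 1 - ρ₁) * (1 - t) = 0 := by
    rw [ht_def, ha_def]
    have hne : 1 + ρ₁ - θ₁ + κ₂ ≠ 0 := ne_of_gt (by linarith)
    field_simp
    ring
  have key : A ^ t * B ^ (1 - t) = y ^ e := by
    rw [hA_def, hB_def, Real.mul_rpow (rpow_pos_of_pos hy _).le (rpow_pos_of_pos hx _).le,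
      Real.mul_rpow (rpow_pos_of_pos hx _).le (rpow_pos_of_pos hy _).le,
      ← Real.rpow_mul hy.le, ← Real.rpow_mul hx.le, ← Real.rpow_mul hx.le,
      ← Real.rpow_mul hy.le]
    calc y ^ ((θ₂ - 1 - ρ₂) * t) * x ^ (κ₂ * t) *
          (x ^ ((θ₁ - 1 - ρ₁) * (1 - t)) * y ^ (κ₁ * (1 - t)))
        = (y ^ ((θ₂ - 1 - ρ₂) * t) * y ^ (κ₁ * (1 - t))) *
            (x ^ ((θ₁ - 1 - ρ₁) * (1 - t)) * x ^ (κ₂ * t)) := by ring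
      _ = y ^ ((θ₂ - 1 - ρ₂) * t + κ₁ * (1 - t)) *
            x ^ ((θ₁ - 1 - ρ₁) * (1 - t) + κ₂ * t) := by
          rw [← Real.rpow_add hy, ← Real.rpow_add hx]
      _ = y ^ e := by
          rw [show (θ₁ - 1 - ρ₁) * (1 - t) + κ₂ * t = 0 by linarith [hxexp],
            Real.rpow_zero, mul_one]
          congr 1
          rw [he_def]; ring
  have step1 : A ^ t * B ^ (1 - t) ≤ A + B := by
    calc A ^ t * B ^ (1 - t)
        ≤ (A + B) ^ t * (A + B) ^ (1 - t) := by
          apply mul_le_mul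
          · exact Real.rpow_le_rpow hApos.le (by linarith) ht0.le
          · exact Real.rpow_le_rpow hBpos.le (by linarith) (by linarith)
          · exact (rpow_pos_of_pos hBpos _).le
          · exact (rpow_pos_of_pos (by linarith : (0:ℝ) < A + B) _).le
      _ = (A + B) ^ (t + (1 - t)) := (Real.rpow_add (by linarith) _ _).symm
      _ = A + B := by norm_num
  have step4 : (m : ℝ) ^ (r₂ - ρ₂ - e) ≤ y ^ (-(r₂ - ρ₂ - e)) := by
    have h5 : (1 / (m : ℝ)) ^ (-(r₂ - ρ₂ - e)) ≤ y ^ (-(r₂ - ρ₂ - e)) :=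
      Real.rpow_le_rpow_of_nonpos hy hym (by linarith)
    calc (m : ℝ) ^ (r₂ - ρ₂ - e) = (1 / (m : ℝ)) ^ (-(r₂ - ρ₂ - e)) := by
          rw [one_div, ← Real.rpow_neg_one, ← Real.rpow_mul hmpos.le]
          norm_num
      _ ≤ _ := h5
  calc A + B ≥ y ^ e := by rw [← key]; exact step1
    _ = y ^ (r₂ - ρ₂) * y ^ (-(r₂ - ρ₂ - e)) := by
        rw [← Real.rpow_add hy]; ring_nf
    _ ≥ y ^ (r₂ - ρ₂) * (m : ℝ) ^ (r₂ - ρ₂ - e) := by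
        apply mul_le_mul_of_nonneg_left step4 (rpow_pos_of_pos hy _).le
    _ = 1 * (m : ℝ) ^ (r₂ - ρ₂ - e) * y ^ (r₂ - ρ₂) := by ring
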